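/- Let G be a group, κ : G → G a group automorphism with κ ∘ κ = id_G, and δ : G → G a map with κ ∘ δ = δ ∘ κ; define x ◁ y = κ(x)δ(y). Then for any a₁, …, aₙ, x ∈ G, the condition κ^{n+1}(x) = A_{a₁,…,aₙ}(x) ◁ κ^{n+1}(x) holds if and only if δ(κⁿ(a₁)) δ(κ^{n−1}(a₂)) ⋯ δ(κ(aₙ)) δ(κ^{n+1}(x)) = 1 in G. -/

import Mathlib

private lemma key_fold {G : Type*} [Group G] (κ : G →* G)
    (δ : G → G) (hcomm : ∀ x, κ (δ x) = δ (κ x)) :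
    ∀ (n : ℕ) (a : Fin n → G) (x : G),
      (List.ofFn a).foldl (fun u v => κ u * δ v) x
        = (⇑κ)^[n] x * (List.ofFn fun i : Fin n => δ ((⇑κ)^[n - 1 - i.val] (a i))).prod := by
  intro n
  induction n with
  | zero => intro a x; simp
  | succ n ih =>
      intro a x
      rw [List.ofFn_succ' a, List.concat_eq_append, List.foldl_append]
      simp only [List.foldl_cons, List.foldl_nil]
      rw [ih (fun i => a i.castSucc) x]
      rw [map_mul]
      have hκiter : ∀ (m : ℕ) (y : G), κ ((⇑κ)^[m] y) = (⇑κ)^[m+1] y := by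
        intro m y
        rw [← Function.iterate_succ_apply' κ m y]
      rw [hκiter]
      have hprod : κ ((List.ofFn fun i : Fin n => δ ((⇑κ)^[n - 1 - i.val] (a i.castSucc))).prod)
          = (List.ofFn fun i : Fin n => δ ((⇑κ)^[n - i.val] (a i.castSucc))).prod := by
        rw [map_list_prod, List.map_ofFn]
        refine congrArg List.prod (congrArg List.ofFn (funext fun i => ?_))
        simp only [Function.comp_apply]
        rw [hcomm, ← Function.iterate_succ_apply' κ _ (a i.castSucc) ]
        congr 2
        omega
      rw [hprod]
      rw [List.ofFn_succ' (fun i : Fin (n+1) => δ ((⇑κ)^[n + 1 - 1 - i.val] (a i)))]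
      simp only [List.concat_eq_append, List.prod_append, List.prod_cons, List.prod_nil,
        Fin.val_last, Fin.coe_castSucc]
      simp only [Nat.add_sub_cancel, Nat.sub_self, Function.iterate_zero, id_eq, mul_one]
      rw [mul_assoc]

/-- With `x ◁ y = κ(x)δ(y)` and `A_{a₁,…,aₙ}(x) = (⋯(x ◁ a₁)⋯) ◁ aₙ`,
the condition `κ^{n+1}(x) = A_{a₁,…,aₙ}(x) ◁ κ^{n+1}(x)` holds if and only if
`δ(κⁿ(a₁)) δ(κ^{n−1}(a₂)) ⋯ δ(κ(aₙ)) δ(κ^{n+1}(x)) = 1`. -/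
theorem stmt_4 {G : Type*} [Group G] (κ : G →* G) (hκ : ∀ x, κ (κ x) = x)
    (δ : G → G) (hcomm : ∀ x, κ (δ x) = δ (κ x))
    (n : ℕ) (a : Fin n → G) (x : G) :
    ((⇑κ)^[n + 1] x
        = κ ((List.ofFn a).foldl (fun u v => κ u * δ v) x) * δ ((⇑κ)^[n + 1] x))
    ↔ ((List.ofFn fun i : Fin n => δ ((⇑κ)^[n - i.val] (a i))).prod
        * δ ((⇑κ)^[n + 1] x) = 1) := by
  rw [key_fold κ δ hcomm n a x, map_mul]
  have h1 : κ ((⇑κ)^[n] x) = (⇑κ)^[n+1] x := by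
    rw [← Function.iterate_succ_apply' κ n x]
  have h2 : κ ((List.ofFn fun i : Fin n => δ ((⇑κ)^[n - 1 - i.val] (a i))).prod)
      = (List.ofFn fun i : Fin n => δ ((⇑κ)^[n - i.val] (a i))).prod := by
    rw [map_list_prod, List.map_ofFn]
    refine congrArg List.prod (congrArg List.ofFn (funext fun i => ?_))
    simp only [Function.comp_apply]
    rw [hcomm, ← Function.iterate_succ_apply' κ _ (a i)]
    congr 2
    omega
  rw [h1, h2, mul_assoc, left_eq_mul]
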